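/- (No arbitrage domain for the Symmetric SVI at the exceptional level γ̂.) Let ρ = 0, μ = 0 and γ = −√((9 + 5√3)/18). Then the Symmetric SVI is arbitrage-free if and only if b < 2·√(3√3 − 5) and σ ≥ −b·g₂(l̂)/(2·G₁(l̂)), where l̂ = 3^(−1/4) (the point corresponding to ẑ = 1/√(l̂²+1) = √((3−√3)/2)). -/

import Mathlib

set_option maxHeartbeats 1600000


/-- SVI normalized total variance shape: `N(l) = γ + ρ·l + √(l²+1)`. -/
noncomputable def Nf (γ ρ l : ℝ) : ℝ := γ + ρ * l + Real.sqrt (l ^ 2 + 1)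

/-- `N'(l) = ρ + l/√(l²+1)`. -/
noncomputable def Nf' (ρ l : ℝ) : ℝ := ρ + l / Real.sqrt (l ^ 2 + 1)

/-- `N''(l) = (l²+1)^(−3/2)`. -/
noncomputable def Nf'' (l : ℝ) : ℝ := (l ^ 2 + 1) ^ (-(3 : ℝ) / 2)

/-- `h(l) = 1 − N'(l)·(l+μ)/(2N(l))`. -/
noncomputable def hf (γ ρ μ l : ℝ) : ℝ := 1 - Nf' ρ l * (l + μ) / (2 * Nf γ ρ l)

/-- `g(l) = N'(l)/4`. -/
noncomputable def gf (ρ l : ℝ) : ℝ := Nf' ρ l / 4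

/-- `g₂(l) = N''(l) − N'(l)²/(2N(l))`. -/
noncomputable def g2 (γ ρ l : ℝ) : ℝ := Nf'' l - (Nf' ρ l) ^ 2 / (2 * Nf γ ρ l)

/-- `G₁(l) = (h(l) − b·g(l))·(h(l) + b·g(l))`. -/
noncomputable def G1 (γ b ρ μ l : ℝ) : ℝ :=
  (hf γ ρ μ l - b * gf ρ l) * (hf γ ρ μ l + b * gf ρ l)

/-- Fukasawa (weak no-arbitrage) conditions: both factors of `G₁` are positive on `ℝ`. -/
def FukasawaCond (γ b ρ μ : ℝ) : Prop :=
  ∀ l : ℝ, 0 < hf γ ρ μ l - b * gf ρ l ∧ 0 < hf γ ρ μ l + b * gf ρ l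

/-- No Butterfly arbitrage (Martini–Mingone characterization): Fukasawa conditions plus
`G₁ + (b/(2σ))·g₂ ≥ 0` on `ℝ`. -/
def ArbitrageFree (γ b ρ μ σ : ℝ) : Prop :=
  FukasawaCond γ b ρ μ ∧ ∀ l : ℝ, 0 ≤ G1 γ b ρ μ l + b / (2 * σ) * g2 γ ρ l


noncomputable def rr : ℝ := Real.sqrt 3
noncomputable def tt : ℝ := Real.sqrt ((3 + Real.sqrt 3) / 3)
noncomputable def uu : ℝ := Real.sqrt (3 * Real.sqrt 3 - 5)
noncomputable def gg : ℝ := -Real.sqrt ((9 + 5 * Real.sqrt 3) / 18)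
noncomputable def lh : ℝ := (3 : ℝ) ^ (-(1 : ℝ) / 4)

lemma hrr : Real.sqrt 3 = rr := rfl
lemma hr2 : rr ^ 2 = 3 := Real.sq_sqrt (by norm_num)
lemma hr0 : 0 < rr := Real.sqrt_pos.mpr (by norm_num)
lemma hrl : 1.7320508 < rr := by nlinarith [hr2, hr0]
lemma hru : rr < 1.7320509 := by nlinarith [hr2, hr0]
lemma ht2 : tt ^ 2 = (3 + rr) / 3 := Real.sq_sqrt (by positivity)
lemma ht0 : 0 < tt := Real.sqrt_pos.mpr (by positivity)
lemma htl : 1.2559260 < tt := by nlinarith [ht2, ht0, hrl]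
lemma htu : tt < 1.2559261 := by nlinarith [ht2, ht0, hru]
lemma hu2 : uu ^ 2 = 3 * rr - 5 := Real.sq_sqrt (by rw [hrr]; nlinarith [hr2, hr0])
lemma hu0 : 0 < uu := Real.sqrt_pos.mpr (by rw [hrr]; nlinarith [hr2, hr0])
lemma hgg : gg = -((3 + rr) * tt / 6) := by
  have h : (9 + 5 * Real.sqrt 3) / 18 = ((3 + rr) * tt / 6) ^ 2 := by
    rw [hrr]
    linear_combination (-(1/4) - (1/6)*rr - (1/36)*rr^2) * ht2 + (-(1/12) - (1/108)*rr) * hr2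
  rw [gg, h, Real.sqrt_sq (by nlinarith [hr0, ht0, mul_pos hr0 ht0] : (0:ℝ) ≤ (3 + rr) * tt / 6)]
lemma hg1 : -1 < gg := by
  rw [hgg]
  nlinarith [hrl, hru, htl, htu]
lemma hl0 : 0 < lh := Real.rpow_pos_of_pos (by norm_num) _
lemma hl2 : lh ^ 2 = rr / 3 := by
  have h1 : lh ^ 2 = (3 : ℝ) ^ (-(1 : ℝ) / 2) := by
    rw [lh, ← Real.rpow_natCast ((3 : ℝ) ^ (-(1 : ℝ) / 4)) 2, ← Real.rpow_mul (by norm_num)]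
    norm_num
  have h2 : (3 : ℝ) ^ (-(1 : ℝ) / 2) = (Real.sqrt 3)⁻¹ := by
    rw [show (-(1 : ℝ) / 2) = -(1 / 2 : ℝ) by norm_num, Real.rpow_neg (by norm_num),
      ← Real.sqrt_eq_rpow]
  rw [h1, h2, hrr]
  rw [inv_eq_one_div, div_eq_div_iff hr0.ne' (by norm_num : (3:ℝ) ≠ 0)]
  nlinarith [hr2]
lemma hlt : Real.sqrt (lh ^ 2 + 1) = tt := by
  rw [hl2, show rr / 3 + 1 = (3 + Real.sqrt 3) / 3 by rw [hrr]; ring, tt]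
lemma hul : uu * lh = (2 - rr) * tt := by
  have hsq : (uu * lh) ^ 2 = ((2 - rr) * tt) ^ 2 := by
    linear_combination (lh^2) * hu2 + (-5 + 3*rr) * hl2 + (-4 + 4*rr - rr^2) * ht2
      + ((4/3) - (1/3)*rr) * hr2
  rw [← Real.sqrt_sq (mul_nonneg hu0.le hl0.le), hsq,
    Real.sqrt_sq (by nlinarith [hru, ht0] : (0:ℝ) ≤ (2 - rr) * tt)]

section M0

variable {r t u s l x b σ : ℝ}

lemma consts_pos (hr : r ^ 2 = 3) (ht : t ^ 2 = (3 + r) / 3)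
    (hrl : (1.7320508:ℝ) < r) (hru : r < 1.7320509)
    (htl : (1.2559260:ℝ) < t) (htu : t < 1.2559261) :
    (0 < 88/3 - 40/3*r + (32 - 64/3*r)*t)
    ∧ (0 < 48 - 24*r + (32 - 64/3*r)*t)
    ∧ (0 < 24 - 12*r)
    ∧ (0 < -62/3 + 34/3*r + (-80 + 140/3*r)*t)
    ∧ (0 < -44 + 24*r + (-110 + 194/3*r)*t)
    ∧ (0 < -22 + 12*r + (-45 + 27*r)*t)
    ∧ (0 < (-15 + 9*r)*t) := by
  refine ⟨?_, ?_, ?_, ?_, ?_, ?_, ?_⟩ <;>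
    nlinarith [mul_pos (sub_pos.2 hru) (sub_pos.2 htu), mul_pos (sub_pos.2 hru) (sub_pos.2 htl),
      mul_pos (sub_pos.2 hrl) (sub_pos.2 htu), mul_pos (sub_pos.2 hrl) (sub_pos.2 htl)]

lemma Ppos (hr : r ^ 2 = 3) (ht : t ^ 2 = (3 + r) / 3)
    (hrl : (1.7320508:ℝ) < r) (hru : r < 1.7320509)
    (htl : (1.2559260:ℝ) < t) (htu : t < 1.2559261) (hs : 1 ≤ s) :
    0 ≤ 4*(s^2 + 2*(-((3 + r) * t / 6))*s + 1)^2
      - 4*(3*r - 5)*(s^2 - 1)*(-((3 + r) * t / 6) + s)^2 := by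
  obtain ⟨c0, c1, c2, -, -, -, -⟩ := consts_pos hr ht hrl hru htl htu
  have key : 4*(s^2 + 2*(-((3 + r) * t / 6))*s + 1)^2
      - 4*(3*r - 5)*(s^2 - 1)*(-((3 + r) * t / 6) + s)^2
      = (88/3 - 40/3*r + (32 - 64/3*r)*t)*(s-t)^2
        + (48 - 24*r + (32 - 64/3*r)*t)*((s-1)*(s-t)^2)
        + (24 - 12*r)*((s-1)^2*(s-t)^2) := by
    linear_combination ((-31)/3 + r + (13/9)*r^2 + (1/3)*r^3 - 32*s*t + (64/3)*s*r*t + 49*s^2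
        - (83/3)*s^2*r - s^2*r^2 - (1/3)*s^2*r^3) * ht
      + (19/9 + (22/27)*r + (1/9)*r^2 + (28/9)*s*t - (95/9)*s^2 - (2/3)*s^2*r
        - (1/9)*s^2*r^2 + 4*s^3*t) * hr
  have h1 : (0:ℝ) ≤ s - 1 := by linarith
  rw [key]
  exact add_nonneg (add_nonneg (mul_nonneg c0.le (sq_nonneg _))
    (mul_nonneg c1.le (mul_nonneg h1 (sq_nonneg _))))
    (mul_nonneg c2.le (mul_nonneg (sq_nonneg _) (sq_nonneg _)))

lemma Epos (hr : r ^ 2 = 3) (ht : t ^ 2 = (3 + r) / 3)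
    (hrl : (1.7320508:ℝ) < r) (hru : r < 1.7320509)
    (htl : (1.2559260:ℝ) < t) (htu : t < 1.2559261) (hs : 1 ≤ s) :
    0 ≤ 2*(7 - 4*r)*(-((3 + r) * t / 6) + s)*(-s^3 + 3*s + 2*(-((3 + r) * t / 6)))
      + 3*t*(3*r - 5)*s*(s^2 + 2*(-((3 + r) * t / 6))*s + 1)^2 := by
  obtain ⟨-, -, -, c0, c1, c2, c3⟩ := consts_pos hr ht hrl hru htl htu
  have key : 2*(7 - 4*r)*(-((3 + r) * t / 6) + s)*(-s^3 + 3*s + 2*(-((3 + r) * t / 6)))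
      + 3*t*(3*r - 5)*s*(s^2 + 2*(-((3 + r) * t / 6))*s + 1)^2
      = (-62/3 + 34/3*r + (-80 + 140/3*r)*t)*(s-t)^2
        + (-44 + 24*r + (-110 + 194/3*r)*t)*((s-1)*(s-t)^2)
        + (-22 + 12*r + (-45 + 27*r)*t)*((s-1)^2*(s-t)^2)
        + ((-15 + 9*r)*t)*((s-1)^3*(s-t)^2) := by
    linear_combination (17/3 + (4/3)*r - (17/9)*r^2 - (4/9)*r^3 + 65*s*t - (113/3)*s*r*t
        - 78*s^2 + (166/3)*s^2*r - 6*s^2*r^2 - 10*s^3*r*t + (13/3)*s^3*r^2*t + s^3*r^3*t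
        + 10*s^4*r - 6*s^4*r^2) * ht
      + (-(17/9) - (29/27)*r - (4/27)*r^2 - (53/9)*s*t + (112/9)*s^2 - 2*s^2*r + (2/3)*s^3*t
        + (22/9)*s^3*r*t + (1/3)*s^3*r^2*t - (8/3)*s^4 - 2*s^4*r) * hr
  have h1 : (0:ℝ) ≤ s - 1 := by linarith
  rw [key]
  exact add_nonneg (add_nonneg (add_nonneg (mul_nonneg c0.le (sq_nonneg _))
    (mul_nonneg c1.le (mul_nonneg h1 (sq_nonneg _))))
    (mul_nonneg c2.le (mul_nonneg (sq_nonneg _) (sq_nonneg _))))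
    (mul_nonneg c3.le (mul_nonneg (pow_nonneg h1 3) (sq_nonneg _)))

lemma Wpos (hr : r ^ 2 = 3) (ht : t ^ 2 = (3 + r) / 3)
    (hrl : (1.7320508:ℝ) < r) (hru : r < 1.7320509)
    (htl : (1.2559260:ℝ) < t) (htu : t < 1.2559261) (hs : 1 ≤ s)
    (hx0 : 0 ≤ x) (hxB : x ≤ 4*(3*r - 5)) :
    0 ≤ 8*((7 - 4*r)/4 - x*(r - 1)/32)*(-((3 + r) * t / 6) + s)
          *(-s^3 + 3*s + 2*(-((3 + r) * t / 6)))
      + (3*t*(3*r - 5)/4)*s*(4*(s^2 + 2*(-((3 + r) * t / 6))*s + 1)^2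
          - x*(s^2 - 1)*(-((3 + r) * t / 6) + s)^2) := by
  have hP := Ppos hr ht hrl hru htl htu hs
  have hE := Epos hr ht hrl hru htl htu hs
  have key : 4*(3*r - 5)*(8*((7 - 4*r)/4 - x*(r - 1)/32)*(-((3 + r) * t / 6) + s)
          *(-s^3 + 3*s + 2*(-((3 + r) * t / 6)))
      + (3*t*(3*r - 5)/4)*s*(4*(s^2 + 2*(-((3 + r) * t / 6))*s + 1)^2
          - x*(s^2 - 1)*(-((3 + r) * t / 6) + s)^2))
      = (4*(3*r - 5) - x)*(2*(7 - 4*r)*(-((3 + r) * t / 6) + s)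
            *(-s^3 + 3*s + 2*(-((3 + r) * t / 6)))
          + 3*t*(3*r - 5)*s*(s^2 + 2*(-((3 + r) * t / 6))*s + 1)^2)
        + x*((3*t*(3*r - 5)/4)*s*(4*(s^2 + 2*(-((3 + r) * t / 6))*s + 1)^2
          - 4*(3*r - 5)*(s^2 - 1)*(-((3 + r) * t / 6) + s)^2)) := by
    linear_combination ((9/2)*x + 3*x*r - x*r^2 - x*r^3 - (1/6)*x*r^4) * ht
      + (-(3/2)*x - (3/2)*x*r - (1/2)*x*r^2 - (1/18)*x*r^3 + (15/2)*s*x*t + (5/2)*s*x*r*t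
        - 9*s^2*x - (3/2)*s^3*x*t - (1/2)*s^3*x*r*t + 3*s^4*x) * hr
  have hδ : 0 ≤ 3*t*(3*r - 5)/4 := by nlinarith [hrl, htl]
  have hs0 : (0:ℝ) ≤ s := by linarith
  have hr35 : (0:ℝ) < 4*(3*r - 5) := by nlinarith [hrl]
  have hY := add_nonneg (mul_nonneg (sub_nonneg.2 hxB) hE)
    (mul_nonneg hx0 (mul_nonneg (mul_nonneg hδ hs0) hP))
  rw [← key] at hY
  by_contra hcon
  push_neg at hcon
  nlinarith [mul_neg_of_pos_of_neg hr35 hcon, hY]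

lemma fuk_num_pos (hr : r ^ 2 = 3) (ht : t ^ 2 = (3 + r) / 3)
    (hrl : (1.7320508:ℝ) < r) (hru : r < 1.7320509)
    (htl : (1.2559260:ℝ) < t) (htu : t < 1.2559261)
    (hu : u ^ 2 = 3*r - 5) (hu0 : 0 < u) (hs : 1 ≤ s) (hl : l ^ 2 = s ^ 2 - 1)
    (hb0 : 0 < b) (hbu : b < 2*u) :
    0 < 2*(s^2 + 2*(-((3 + r) * t / 6))*s + 1) - b*l*(-((3 + r) * t / 6) + s) := by
  have hγ2 : (-((3 + r) * t / 6)) ^ 2 = (9 + 5*r)/18 := by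
    linear_combination ((1/4) + (1/6)*r + (1/36)*r^2) * ht + ((1/12) + (1/108)*r) * hr
  have hC : 0 < -((3 + r) * t / 6) + s := by nlinarith [hrl, hru, htl, htu, hs]
  have hA : 0 < s^2 + 2*(-((3 + r) * t / 6))*s + 1 := by
    nlinarith [sq_nonneg (s + -((3 + r) * t / 6)), hγ2, hrl, hru]
  have hP := Ppos hr ht hrl hru htl htu hs
  rcases le_or_gt l 0 with hl0 | hl0
  · nlinarith [hA, mul_nonneg (mul_pos hb0 hC).le (neg_nonneg.2 hl0)]
  · have e : (2*u*l*(-((3 + r) * t / 6) + s))^2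
        = 4*(3*r - 5)*(s^2 - 1)*(-((3 + r) * t / 6) + s)^2 := by
      linear_combination (4*l^2*(-((3 + r) * t / 6) + s)^2) * hu
        + (4*(3*r - 5)*(-((3 + r) * t / 6) + s)^2) * hl
    have hw : 0 < 2*u*l*(-((3 + r) * t / 6) + s) :=
      mul_pos (mul_pos (by linarith) hl0) hC
    have h2u : 2*u*l*(-((3 + r) * t / 6) + s) ≤ 2*(s^2 + 2*(-((3 + r) * t / 6))*s + 1) := by
      nlinarith [e, hP, hw, hA]
    nlinarith [h2u, mul_lt_mul_of_pos_right hbu (mul_pos hl0 hC)]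

lemma cond2_num_nonneg (hr : r ^ 2 = 3) (ht : t ^ 2 = (3 + r) / 3)
    (hrl : (1.7320508:ℝ) < r) (hru : r < 1.7320509)
    (htl : (1.2559260:ℝ) < t) (htu : t < 1.2559261)
    (hs : 1 ≤ s) (hl : l ^ 2 = s ^ 2 - 1) (hb0 : 0 < b) (hσ0 : 0 < σ)
    (hxB : b^2 ≤ 4*(3*r - 5))
    (hκ : 0 < (7 - 4*r)/4 - b^2*(r - 1)/32)
    (hσκ : b*(3*t*(3*r - 5)/4) ≤ 2*σ*((7 - 4*r)/4 - b^2*(r - 1)/32)) :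
    0 ≤ σ*s*(4*(s^2 + 2*(-((3 + r) * t / 6))*s + 1)^2
          - b^2*l^2*(-((3 + r) * t / 6) + s)^2)
      + 4*b*(-((3 + r) * t / 6) + s)*(-s^3 + 3*s + 2*(-((3 + r) * t / 6))) := by
  have el : 4*(s^2 + 2*(-((3 + r) * t / 6))*s + 1)^2 - b^2*l^2*(-((3 + r) * t / 6) + s)^2
      = 4*(s^2 + 2*(-((3 + r) * t / 6))*s + 1)^2
        - b^2*(s^2 - 1)*(-((3 + r) * t / 6) + s)^2 := by
    linear_combination (-(b^2*(-((3 + r) * t / 6) + s)^2)) * hl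
  rw [el]
  have hW := Wpos hr ht hrl hru htl htu hs (sq_nonneg b) hxB
  have hP := Ppos hr ht hrl hru htl htu hs
  have hT : 0 ≤ (s^2 - 1)*(-((3 + r) * t / 6) + s)^2 :=
    mul_nonneg (by nlinarith [hs]) (sq_nonneg _)
  have h5 : 0 ≤ 4*(s^2 + 2*(-((3 + r) * t / 6))*s + 1)^2
      - b^2*(s^2 - 1)*(-((3 + r) * t / 6) + s)^2 := by
    nlinarith [hP, mul_nonneg (sub_nonneg.2 hxB) hT]
  have hsP : 0 ≤ s*(4*(s^2 + 2*(-((3 + r) * t / 6))*s + 1)^2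
      - b^2*(s^2 - 1)*(-((3 + r) * t / 6) + s)^2) := mul_nonneg (by linarith) h5
  nlinarith [mul_nonneg hb0.le hW, mul_nonneg (sub_nonneg.2 hσκ) hsP, hκ]

end M0

lemma s_sq (l : ℝ) : (Real.sqrt (l ^ 2 + 1)) ^ 2 = l ^ 2 + 1 :=
  Real.sq_sqrt (by positivity)

lemma s_ge1 (l : ℝ) : 1 ≤ Real.sqrt (l ^ 2 + 1) := by
  have h := Real.sqrt_le_sqrt (show (1:ℝ) ≤ l ^ 2 + 1 by nlinarith [sq_nonneg l])
  simpa using h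

lemma s_pos (l : ℝ) : 0 < Real.sqrt (l ^ 2 + 1) := lt_of_lt_of_le one_pos (s_ge1 l)

lemma C_pos (l : ℝ) : 0 < gg + Real.sqrt (l ^ 2 + 1) := by
  have h1 := hg1; have h2 := s_ge1 l; linarith

lemma Nf''_eq (l : ℝ) : Nf'' l = ((Real.sqrt (l ^ 2 + 1)) ^ 3)⁻¹ := by
  rw [Nf'']
  conv_lhs => rw [← s_sq l]
  rw [← Real.rpow_natCast (Real.sqrt (l ^ 2 + 1)) 2, ← Real.rpow_mul (Real.sqrt_nonneg _),
    ← Real.rpow_natCast (Real.sqrt (l ^ 2 + 1)) 3, ← Real.rpow_neg (Real.sqrt_nonneg _)]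
  norm_num

lemma fuk_sub (b l : ℝ) :
    (hf gg 0 0 l - b * gf 0 l) * (4 * Real.sqrt (l ^ 2 + 1) * (gg + Real.sqrt (l ^ 2 + 1)))
      = 2*((Real.sqrt (l ^ 2 + 1))^2 + 2*gg*Real.sqrt (l ^ 2 + 1) + 1)
        - b*l*(gg + Real.sqrt (l ^ 2 + 1)) := by
  have h2 := s_sq l
  have h0 := (s_pos l).ne'
  have hC := (C_pos l).ne'
  rw [hf, gf, Nf', Nf]
  simp only [zero_mul, add_zero, zero_add]
  field_simp
  linear_combination 4 * h2

lemma fuk_add (b l : ℝ) :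
    (hf gg 0 0 l + b * gf 0 l) * (4 * Real.sqrt (l ^ 2 + 1) * (gg + Real.sqrt (l ^ 2 + 1)))
      = 2*((Real.sqrt (l ^ 2 + 1))^2 + 2*gg*Real.sqrt (l ^ 2 + 1) + 1)
        + b*l*(gg + Real.sqrt (l ^ 2 + 1)) := by
  have h := fuk_sub (-b) l
  linear_combination h

lemma g2_prod (l : ℝ) :
    g2 gg 0 l * (2 * (Real.sqrt (l ^ 2 + 1)) ^ 3 * (gg + Real.sqrt (l ^ 2 + 1)))
      = -(Real.sqrt (l ^ 2 + 1)) ^ 3 + 3 * Real.sqrt (l ^ 2 + 1) + 2 * gg := by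
  have h2 := s_sq l
  have h0 := (s_pos l).ne'
  have hC := (C_pos l).ne'
  rw [g2, Nf''_eq, Nf', Nf]
  simp only [zero_mul, add_zero, zero_add]
  field_simp
  linear_combination (Real.sqrt (l ^ 2 + 1)) * h2

lemma G1_prod (b l : ℝ) :
    G1 gg b 0 0 l * (16 * (Real.sqrt (l ^ 2 + 1)) ^ 2 * (gg + Real.sqrt (l ^ 2 + 1)) ^ 2)
      = 4*((Real.sqrt (l ^ 2 + 1))^2 + 2*gg*Real.sqrt (l ^ 2 + 1) + 1)^2
        - b^2*l^2*(gg + Real.sqrt (l ^ 2 + 1))^2 := by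
  have e1 := fuk_sub b l
  have e2 := fuk_add b l
  have e12 := congrArg₂ (· * ·) e1 e2
  rw [G1]
  linear_combination e12

lemma cond2_prod (b σ l : ℝ) (hσ0 : σ ≠ 0) :
    (G1 gg b 0 0 l + b / (2 * σ) * g2 gg 0 l)
        * (16 * σ * (Real.sqrt (l ^ 2 + 1)) ^ 3 * (gg + Real.sqrt (l ^ 2 + 1)) ^ 2)
      = σ * Real.sqrt (l ^ 2 + 1)
          * (4*((Real.sqrt (l ^ 2 + 1))^2 + 2*gg*Real.sqrt (l ^ 2 + 1) + 1)^2
            - b^2*l^2*(gg + Real.sqrt (l ^ 2 + 1))^2)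
        + 4*b*(gg + Real.sqrt (l ^ 2 + 1))
          * (-(Real.sqrt (l ^ 2 + 1)) ^ 3 + 3 * Real.sqrt (l ^ 2 + 1) + 2 * gg) := by
  have e1 := G1_prod b l
  have e2 := g2_prod l
  have key : (G1 gg b 0 0 l + b / (2 * σ) * g2 gg 0 l)
        * (16 * σ * (Real.sqrt (l ^ 2 + 1)) ^ 3 * (gg + Real.sqrt (l ^ 2 + 1)) ^ 2)
      = σ * Real.sqrt (l ^ 2 + 1)
          * (G1 gg b 0 0 l * (16 * (Real.sqrt (l ^ 2 + 1)) ^ 2 * (gg + Real.sqrt (l ^ 2 + 1)) ^ 2))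
        + 4*b*(gg + Real.sqrt (l ^ 2 + 1))
          * (g2 gg 0 l * (2 * (Real.sqrt (l ^ 2 + 1)) ^ 3 * (gg + Real.sqrt (l ^ 2 + 1)))) := by
    have hcan : b / (2 * σ) * (2 * σ) = b := div_mul_cancel₀ _ (by simpa using hσ0)
    have key0 : (G1 gg b 0 0 l + b / (2 * σ) * g2 gg 0 l)
        * (16 * σ * (Real.sqrt (l ^ 2 + 1)) ^ 3 * (gg + Real.sqrt (l ^ 2 + 1)) ^ 2)
      = σ * Real.sqrt (l ^ 2 + 1)
          * (G1 gg b 0 0 l * (16 * (Real.sqrt (l ^ 2 + 1)) ^ 2 * (gg + Real.sqrt (l ^ 2 + 1)) ^ 2))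
        + (b / (2 * σ) * (2 * σ)) * ((gg + Real.sqrt (l ^ 2 + 1))
          * (g2 gg 0 l * (2 * (Real.sqrt (l ^ 2 + 1)) ^ 3 * (gg + Real.sqrt (l ^ 2 + 1))))) * 4 := by
      ring
    rw [hcan] at key0
    rw [key0]
    ring
  rw [key, e1, e2]

lemma eg2 : g2 gg 0 lh = 3 * tt * (5 - 3 * rr) / 4 := by
  have h := g2_prod lh
  rw [hlt] at h
  have hCt : 0 < gg + tt := by have := hg1; have := htl; linarith
  have hD : (0:ℝ) < 2 * tt ^ 3 * (gg + tt) := mul_pos (by norm_num : (0:ℝ) < 2) (mul_pos (pow_pos ht0 3) hCt) |>.trans_eq (by ring)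
  apply mul_right_cancel₀ hD.ne'
  rw [h, hgg]
  linear_combination ((-(19/4))*tt - (15/4)*tt^3 + (9/4)*rr*tt + (7/2)*rr*tt^3 + (5/12)*rr^2*tt
    - (3/4)*rr^2*tt^3 - (1/4)*rr^3*tt) * ht2 + ((11/12)*tt - (1/9)*rr*tt - (1/12)*rr^2*tt) * hr2

lemma eG1 (b : ℝ) : G1 gg b 0 0 lh = (7 - 4*rr)/4 - b^2*(rr - 1)/32 := by
  have h := G1_prod b lh
  rw [hlt, hl2] at h
  have hCt : 0 < gg + tt := by have := hg1; have := htl; linarith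
  have hD : (0:ℝ) < 16 * tt ^ 2 * (gg + tt) ^ 2 := by
    have := mul_pos (pow_pos ht0 2) (pow_pos hCt 2); nlinarith [this]
  apply mul_right_cancel₀ hD.ne'
  rw [h, hgg]
  linear_combination (-7 - 7*tt^2 + (11/3)*rr + (26/3)*rr*tt^2 - (1/9)*rr^2 - 3*rr^2*tt^2
      - (5/9)*rr^3 + (4/9)*rr^3*tt^2 + (4/27)*rr^4 - (1/8)*b^2 - (1/8)*b^2*tt^2 + (1/12)*b^2*rr
      + (5/24)*b^2*rr*tt^2 + (1/36)*b^2*rr^2 - (7/72)*b^2*rr^2*tt^2 - (1/36)*b^2*rr^3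
      + (1/72)*b^2*rr^3*tt^2 + (1/216)*b^2*rr^4) * ht2
    + (1 - (4/9)*rr - (1/27)*rr^2 + (4/81)*rr^3 + (1/24)*b^2 - (1/72)*b^2*rr
      - (1/216)*b^2*rr^2 + (1/648)*b^2*rr^3) * hr2

lemma ehf : hf gg 0 0 lh = (2 - rr)/2 := by
  have h := fuk_sub 0 lh
  rw [hlt] at h
  have hCt : 0 < gg + tt := by have := hg1; have := htl; linarith
  have hD : (0:ℝ) < 4 * tt * (gg + tt) := by
    have := mul_pos ht0 hCt; nlinarith [this]
  have h' : hf gg 0 0 lh * (4 * tt * (gg + tt)) = 2*(tt^2 + 2*gg*tt + 1) := by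
    simpa using h
  apply mul_right_cancel₀ hD.ne'
  rw [h', hgg]
  linear_combination (-2 + rr - (1/3)*rr^2) * ht2 + (-(1/9)*rr) * hr2


/-- no-arbitrage domain for the Symmetric SVI at the exceptional level
γ̂ = −√((9+5√3)/18), where l̂ = 3^(−1/4). -/
theorem symmetric_exceptional_gamma (b σ : ℝ) (hb : 0 < b) (hσ : 0 < σ) :
    ArbitrageFree (-Real.sqrt ((9 + 5 * Real.sqrt 3) / 18)) b 0 0 σ ↔
      b < 2 * Real.sqrt (3 * Real.sqrt 3 - 5) ∧
      σ ≥ -(b * g2 (-Real.sqrt ((9 + 5 * Real.sqrt 3) / 18)) 0 ((3 : ℝ) ^ (-(1 : ℝ) / 4))) /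
        (2 * G1 (-Real.sqrt ((9 + 5 * Real.sqrt 3) / 18)) b 0 0 ((3 : ℝ) ^ (-(1 : ℝ) / 4))) := by
  show ArbitrageFree gg b 0 0 σ ↔
      b < 2 * uu ∧ σ ≥ -(b * g2 gg 0 lh) / (2 * G1 gg b 0 0 lh)
  have hCt : 0 < gg + tt := by have := hg1; have := htl; linarith
  constructor
  · rintro ⟨hfuk, hcond⟩
    obtain ⟨hsub, hadd⟩ := hfuk lh
    have hG1pos : 0 < G1 gg b 0 0 lh := by rw [G1]; exact mul_pos hsub hadd
    have e1 := fuk_sub b lh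
    rw [hlt] at e1
    have hD : (0:ℝ) < 4 * tt * (gg + tt) := by nlinarith [mul_pos ht0 hCt]
    have hpos : 0 < 2*(tt^2 + 2*gg*tt + 1) - b*lh*(gg + tt) := by
      rw [← e1]; exact mul_pos hsub hD
    have eA : 2*(tt^2 + 2*gg*tt + 1) = 2*uu*lh*(gg + tt) := by
      rw [hgg]
      linear_combination (-tt + (1/3)*rr*tt) * hul + (-2 + rr - (1/3)*rr^2) * ht2
        + (-(1/9)*rr) * hr2
    rw [eA] at hpos
    have hq : 0 < lh*(gg + tt) := mul_pos hl0 hCt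
    refine ⟨by nlinarith [hpos, hq], ?_⟩
    have hc := hcond lh
    rw [eG1 b] at hG1pos
    have hc' := hc
    rw [eg2, eG1] at hc'
    rw [eg2, eG1, ge_iff_le,
      div_le_iff₀ (by linarith : 0 < 2*((7 - 4*rr)/4 - b^2*(rr - 1)/32))]
    have hd' : b/(2*σ)*(3*tt*(5 - 3*rr)/4)*(2*σ) = b*(3*tt*(5 - 3*rr)/4) := by
      field_simp
    nlinarith [mul_nonneg hc' (by linarith : (0:ℝ) ≤ 2*σ), hd']
  · rintro ⟨hbu, hσ2⟩
    have hb2 : b^2 ≤ 4*(3*rr - 5) := by nlinarith [hu2, hu0, hbu, hb]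
    have hκpos : 0 < (7 - 4*rr)/4 - b^2*(rr - 1)/32 := by
      have eκ : (7 - 4*rr)/4 - b^2*(rr - 1)/32 = (4*(3*rr - 5) - b^2)*(rr - 1)/32 := by
        linear_combination (-(3/8)) * hr2
      have h2 : b^2 < 4*(3*rr - 5) := by nlinarith [hu2, hu0, hbu, hb]
      rw [eκ]
      nlinarith [hrl, h2]
    have hσκ : b*(3*tt*(3*rr - 5)/4) ≤ 2*σ*((7 - 4*rr)/4 - b^2*(rr - 1)/32) := by
      rw [ge_iff_le, eg2, eG1,
        div_le_iff₀ (by linarith : 0 < 2*((7 - 4*rr)/4 - b^2*(rr - 1)/32))] at hσ2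
      nlinarith [hσ2]
    constructor
    · intro l
      have hs1 := s_ge1 l
      have hl2' : l^2 = (Real.sqrt (l^2 + 1))^2 - 1 := by
        have := s_sq l; linarith
      have hDl : (0:ℝ) < 4*Real.sqrt (l^2 + 1)*(gg + Real.sqrt (l^2 + 1)) := by
        nlinarith [mul_pos (s_pos l) (C_pos l)]
      have k1 := fuk_num_pos hr2 ht2 hrl hru htl htu hu2 hu0 hs1 hl2' hb hbu
      have k2 := fuk_num_pos hr2 ht2 hrl hru htl htu hu2 hu0 hs1
        (show (-l)^2 = (Real.sqrt (l^2 + 1))^2 - 1 by nlinarith [s_sq l]) hb hbu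
      rw [← hgg] at k1 k2
      constructor
      · nlinarith [k1, hDl, fuk_sub b l]
      · nlinarith [k2, hDl, fuk_add b l]
    · intro l
      have hs1 := s_ge1 l
      have hl2' : l^2 = (Real.sqrt (l^2 + 1))^2 - 1 := by
        have := s_sq l; linarith
      have key := cond2_num_nonneg hr2 ht2 hrl hru htl htu hs1 hl2' hb hσ hb2 hκpos hσκ
      rw [← hgg] at key
      have e3 := cond2_prod b σ l (ne_of_gt hσ)
      have hD3 : 0 < 16*σ*(Real.sqrt (l^2 + 1))^3*(gg + Real.sqrt (l^2 + 1))^2 := by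
        nlinarith [mul_pos (mul_pos hσ (pow_pos (s_pos l) 3)) (pow_pos (C_pos l) 2)]
      nlinarith [key, e3, hD3]
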